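/- For the open unit interval I° = Set.Ioo (0:ℝ) 1, the subspace of the mapping space C(I°, I°) (with the compact-open topology) consisting of those continuous maps f : I° → I° that are monotone and are homotopy equivalences is a contractible topological space. -/

import Mathlib

namespace Stmt1Aux

abbrev X : Type := ↥(Set.Ioo (0:ℝ) 1)

noncomputable instance : LocallyCompactSpace X := isOpen_Ioo.locallyCompactSpace

/-- convex combination inside (0,1) -/
noncomputable def comb (t : unitInterval) (a b : X) : X :=
  ⟨(1 - (t:ℝ)) * a + (t:ℝ) * b, by
    have h := (convex_Ioo (0:ℝ) 1) a.2 b.2 (show (0:ℝ) ≤ 1 - t by linarith [t.2.2])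
      t.2.1 (by ring)
    simpa [smul_eq_mul] using h⟩

lemma comb_zero (a b : X) : comb 0 a b = a := by
  apply Subtype.ext; simp [comb]

lemma comb_one (a b : X) : comb 1 a b = b := by
  apply Subtype.ext; simp [comb]

lemma continuous_comb :
    Continuous (fun p : unitInterval × X × X => comb p.1 p.2.1 p.2.2) := by
  have h1 : Continuous fun p : unitInterval × X × X => (p.1 : ℝ) :=
    continuous_subtype_val.comp continuous_fst
  have h2 : Continuous fun p : unitInterval × X × X => (p.2.1 : ℝ) :=
    continuous_subtype_val.comp (continuous_fst.comp continuous_snd)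
  have h3 : Continuous fun p : unitInterval × X × X => (p.2.2 : ℝ) :=
    continuous_subtype_val.comp (continuous_snd.comp continuous_snd)
  exact Continuous.subtype_mk (((continuous_const.sub h1).mul h2).add (h1.mul h3)) _

/-- every self-map of (0,1) is homotopic to the identity -/
lemma homotopic_id (h : C(X, X)) : h.Homotopic (ContinuousMap.id X) := by
  refine ⟨⟨⟨fun p => comb p.1 (h p.2) p.2, ?_⟩, ?_, ?_⟩⟩
  · exact continuous_comb.comp (continuous_fst.prodMk
      ((h.continuous.comp continuous_snd).prodMk continuous_snd))
  · intro x; simpa using comb_zero (h x) x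
  · intro x; simpa using comb_one (h x) x

end Stmt1Aux

open Stmt1Aux in
/-- The subspace of `C((0,1), (0,1))` (compact-open topology) consisting of the monotone
homotopy equivalences is contractible. -/
theorem stmt_1 :
    ContractibleSpace
      {f : C(↥(Set.Ioo (0:ℝ) 1), ↥(Set.Ioo (0:ℝ) 1)) //
        Monotone ⇑f ∧
        ∃ g : C(↥(Set.Ioo (0:ℝ) 1), ↥(Set.Ioo (0:ℝ) 1)),
          (g.comp f).Homotopic (ContinuousMap.id _) ∧
          (f.comp g).Homotopic (ContinuousMap.id _)} := by
  set S := {f : C(X, X) //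
        Monotone ⇑f ∧
        ∃ g : C(X, X),
          (g.comp f).Homotopic (ContinuousMap.id _) ∧
          (f.comp g).Homotopic (ContinuousMap.id _)} with hS
  have hid : ∀ f : C(X,X), ∃ g : C(X, X),
      (g.comp f).Homotopic (ContinuousMap.id _) ∧
      (f.comp g).Homotopic (ContinuousMap.id _) :=
    fun f => ⟨ContinuousMap.id X,
      by simpa [ContinuousMap.id_comp] using homotopic_id f,
      by simpa [ContinuousMap.comp_id] using homotopic_id f⟩
  let pt : S := ⟨ContinuousMap.id X, monotone_id, hid _⟩
  rw [contractible_iff_id_nullhomotopic]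
  refine ⟨pt, ?_⟩
  have hmono : ∀ (t : unitInterval) (F : S), Monotone (fun x : X => comb t (F.1 x) x) := by
    intro t F x z hxz
    have h1 : (F.1 x : ℝ) ≤ F.1 z := Subtype.coe_le_coe.2 (F.2.1 hxz)
    have h2 : (x : ℝ) ≤ z := hxz
    have ht0 : (0:ℝ) ≤ t := t.2.1
    have ht1 : (t:ℝ) ≤ 1 := t.2.2
    show ((1 - (t:ℝ)) * (F.1 x) + (t:ℝ) * x : ℝ) ≤ (1 - (t:ℝ)) * (F.1 z) + (t:ℝ) * z
    have e1 := mul_le_mul_of_nonneg_left h1 (by linarith : (0:ℝ) ≤ 1 - t)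
    have e2 := mul_le_mul_of_nonneg_left h2 ht0
    linarith
  refine ⟨⟨⟨fun p => ⟨⟨fun x => comb p.1 (p.2.1 x) x, ?_⟩, hmono p.1 p.2, hid _⟩, ?_⟩, ?_, ?_⟩⟩
  · exact continuous_comb.comp (continuous_const.prodMk
      ((map_continuous p.2.1).prodMk continuous_id))
  · apply Continuous.subtype_mk
    apply ContinuousMap.continuous_of_continuous_uncurry
    have hev : Continuous fun q : (unitInterval × S) × X => (q.1.2.1 : C(X,X)) q.2 :=
      ContinuousEval.continuous_eval.comp
        ((continuous_subtype_val.comp (continuous_snd.comp continuous_fst)).prodMk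
          continuous_snd)
    exact continuous_comb.comp ((continuous_fst.comp continuous_fst).prodMk
      (hev.prodMk continuous_snd))
  · intro F
    apply Subtype.ext
    apply ContinuousMap.ext
    intro x
    simpa using comb_zero (F.1 x) x
  · intro F
    apply Subtype.ext
    apply ContinuousMap.ext
    intro x
    simpa [pt] using comb_one (F.1 x) x
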